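/- Let V be a real vector space, X ⊆ V a convex subset containing 0, and define W := {x ∈ V : ∃ c ∈ X, p ∈ (0,1], P(c,p,x) ∈ X} where P(c,p,x) = p·x + (1-p)·c. Then W is a linear subspace of V containing X. -/

import Mathlib

/-- The set `W = {x : ∃ c ∈ X, p ∈ (0,1], P(c,p,x) ∈ X}` is a linear subspace
containing `X`, for `X` convex with `0 ∈ X` carrying a convex semilattice structure. -/
theorem W_is_subspace
    (V : Type*) [AddCommGroup V] [Module ℝ V] (X : Set V)
    (hX : ∀ x ∈ X, ∀ y ∈ X, ∀ p ∈ Set.Ioo (0 : ℝ) 1, p • x + (1 - p) • y ∈ X)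
    (h0 : (0 : V) ∈ X)
    (o : V → V → V)
    (hoX : ∀ x ∈ X, ∀ y ∈ X, o x y ∈ X)
    (hidem : ∀ x ∈ X, o x x = x)
    (hcomm : ∀ x ∈ X, ∀ y ∈ X, o x y = o y x)
    (hassoc : ∀ x ∈ X, ∀ y ∈ X, ∀ z ∈ X, o x (o y z) = o (o x y) z)
    (hdist : ∀ x ∈ X, ∀ y ∈ X, ∀ z ∈ X, ∀ p ∈ Set.Ioo (0 : ℝ) 1,
      p • o x y + (1 - p) • z = o (p • x + (1 - p) • z) (p • y + (1 - p) • z))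
    (W : Set V)
    (hW : W = {x : V | ∃ c ∈ X, ∃ p ∈ Set.Ioc (0 : ℝ) 1, p • x + (1 - p) • c ∈ X}) :
    ∃ W' : Submodule ℝ V, (W' : Set V) = W ∧ X ⊆ W := by
  subst hW
  -- scaling by t ∈ [0,1] stays in X
  have hscale : ∀ z ∈ X, ∀ t : ℝ, 0 ≤ t → t ≤ 1 → t • z ∈ X := by
    intro z hz t ht0 ht1
    rcases eq_or_lt_of_le ht0 with h | h
    · simpa [← h] using h0
    rcases eq_or_lt_of_le ht1 with h1 | h1
    · simpa [h1] using hz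
    · simpa using hX z hz 0 h0 t ⟨h, h1⟩
  -- closed convex combinations
  have hmix : ∀ a ∈ X, ∀ b ∈ X, ∀ p : ℝ, 0 ≤ p → p ≤ 1 → p • a + (1 - p) • b ∈ X := by
    intro a ha b hb p hp0 hp1
    rcases eq_or_lt_of_le hp0 with h | h
    · simpa [← h] using hb
    rcases eq_or_lt_of_le hp1 with h1 | h1
    · simpa [h1] using ha
    · exact hX a ha b hb p ⟨h, h1⟩
  -- characterization of membership in W
  have hchar : ∀ x : V, (∃ c ∈ X, ∃ p ∈ Set.Ioc (0:ℝ) 1, p • x + (1 - p) • c ∈ X)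
      ↔ ∃ r : ℝ, 0 < r ∧ ∃ a ∈ X, ∃ b ∈ X, r • x = a - b := by
    intro x
    constructor
    · rintro ⟨c, hc, p, ⟨hp0, hp1⟩, hpt⟩
      refine ⟨p, hp0, p • x + (1 - p) • c, hpt, (1 - p) • c,
        hscale c hc _ (by linarith) (by linarith), by abel⟩
    · rintro ⟨r, hr, a, ha, b, hb, hrx⟩
      have h1r : (0:ℝ) < 1 + r := by linarith
      refine ⟨b, hb, r / (1 + r), ⟨by positivity, by
        rw [div_le_one h1r]; linarith⟩, ?_⟩
      have key : (r / (1 + r)) • x + (1 - r / (1 + r)) • b = (1 / (1 + r)) • a := by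
        have h1 : (1:ℝ) - r / (1 + r) = 1 / (1 + r) := by
          field_simp; ring
        rw [h1]
        have h2 : (r / (1 + r)) • x = (1 / (1 + r)) • (r • x) := by
          rw [smul_smul]; ring_nf
        rw [h2, hrx, smul_sub]
        abel
      rw [key]
      exact hscale a ha _ (by positivity) (by
        rw [div_le_one h1r]; linarith)
  refine ⟨{
    carrier := {x : V | ∃ c ∈ X, ∃ p ∈ Set.Ioc (0 : ℝ) 1, p • x + (1 - p) • c ∈ X}
    zero_mem' := ⟨0, h0, 1, ⟨one_pos, le_refl 1⟩, by simpa using h0⟩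
    add_mem' := by
      intro x y hx hy
      rcases (hchar x).mp hx with ⟨r, hr, a, ha, b, hb, hrx⟩
      rcases (hchar y).mp hy with ⟨s, hs, c, hc, d, hd, hsy⟩
      apply (hchar (x + y)).mpr
      have hrs : (0:ℝ) < r + s := by linarith
      set p : ℝ := s / (r + s) with hp
      have hp0 : 0 ≤ p := by positivity
      have hp1 : p ≤ 1 := by rw [hp, div_le_one hrs]; linarith
      have h1p : 1 - p = r / (r + s) := by rw [hp]; field_simp; ring
      refine ⟨r * s / (r + s), by positivity,
        p • a + (1 - p) • c, hmix a ha c hc p hp0 hp1,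
        p • b + (1 - p) • d, hmix b hb d hd p hp0 hp1, ?_⟩
      have e1 : (r * s / (r + s)) • x = p • (r • x) := by
        rw [smul_smul, hp]; ring_nf
      have e2 : (r * s / (r + s)) • y = (1 - p) • (s • y) := by
        rw [smul_smul, h1p]; ring_nf
      rw [smul_add, e1, e2, hrx, hsy, smul_sub, smul_sub]
      abel
    smul_mem' := by
      intro m x hx
      rcases (hchar x).mp hx with ⟨r, hr, a, ha, b, hb, hrx⟩
      apply (hchar (m • x)).mpr
      rcases lt_trichotomy m 0 with hm | hm | hm
      · refine ⟨r / (-m), div_pos hr (by linarith), b, hb, a, ha, ?_⟩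
        rw [smul_smul]
        have hm' : m ≠ 0 := ne_of_lt hm
        have : r / (-m) * m = -r := by rw [div_neg, neg_mul, div_mul_cancel₀ r hm']
        rw [this, neg_smul, hrx]
        abel
      · subst hm
        refine ⟨1, one_pos, 0, h0, 0, h0, by simp⟩
      · refine ⟨r / m, by positivity, a, ha, b, hb, ?_⟩
        rw [smul_smul]
        have : r / m * m = r := by field_simp
        rw [this, hrx]
  }, rfl, ?_⟩
  intro x hx
  exact ⟨x, hx, 1, ⟨one_pos, le_refl 1⟩, by simpa using hx⟩
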